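/- Fix $q \in \mathbb{Z}$ and let $\nu_q: \mathcal{B}([0,2\pi)) \to \mathbb{C}$ be a $\sigma$-additive set function such that $\nu_q(X \oplus \theta) = e^{iq\theta}\nu_q(X)$ for all Borel sets $X \subseteq [0,2\pi)$ and all $\theta \in [0,2\pi)$ (where $\oplus$ is addition modulo $2\pi$), and such that $\nu_q([0,2\pi)) = \delta_{0,q}$. Then there exists $c_q \in \mathbb{C}$, with $c_0 = 1$, such that $\nu_q(X) = c_q\, (2\pi)^{-1}\int_X e^{iq\theta}\, d\theta$ for all Borel $X \subseteq [0,2\pi)$. -/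

import Mathlib

open MeasureTheory Complex

/-- Addition by `θ` modulo `2π` on `[0, 2π)`. -/
noncomputable def wrapAdd (θ x : ℝ) : ℝ :=
  if x + θ < 2 * Real.pi then x + θ else x + θ - 2 * Real.pi

namespace CovAux

noncomputable def s : Set ℝ := Set.Ico 0 (2 * Real.pi)

lemma T_pos : 0 < 2 * Real.pi := by positivity

lemma hs_meas : MeasurableSet s := measurableSet_Ico

/-- the complex indicator -/
noncomputable def ind (X : Set ℝ) (t : ℝ) : ℂ := Set.indicator X (fun _ => (1:ℂ)) t

lemma ind_norm_le (X : Set ℝ) (t : ℝ) : ‖ind X t‖ ≤ 1 := by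
  unfold ind; rcases Set.indicator_eq_zero_or_self X (fun _ => (1:ℂ)) t with h | h <;> simp [h]

lemma ind_meas {X : Set ℝ} (hX : MeasurableSet X) : Measurable (ind X) :=
  Measurable.indicator measurable_const hX

lemma image_eq {X : Set ℝ} (hXs : X ⊆ s) {θ : ℝ} (hθ : θ ∈ s) :
    wrapAdd θ '' X = s ∩ ((fun x => x - θ) ⁻¹' X ∪ (fun x => x - θ + 2 * Real.pi) ⁻¹' X) := by
  obtain ⟨hθ0, hθT⟩ := hθ
  ext x
  constructor
  · rintro ⟨y, hy, rfl⟩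
    obtain ⟨hy0, hyT⟩ := hXs hy
    unfold wrapAdd
    split_ifs with h
    · exact ⟨⟨by linarith, by linarith⟩, Or.inl (by simpa using hy)⟩
    · refine ⟨⟨by linarith, by linarith⟩, Or.inr ?_⟩
      simp only [Set.mem_preimage]
      have : y + θ - 2 * Real.pi - θ + 2 * Real.pi = y := by ring
      rwa [this]
  · rintro ⟨⟨hx0, hxT⟩, hx | hx⟩
    · refine ⟨x - θ, hx, ?_⟩
      unfold wrapAdd
      rw [if_pos (by linarith), sub_add_cancel]
    · refine ⟨x - θ + 2 * Real.pi, hx, ?_⟩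
      obtain ⟨h1, h2⟩ := hXs hx
      unfold wrapAdd
      rw [if_neg (by push_neg; linarith)]
      ring

lemma image_subset {X : Set ℝ} (hXs : X ⊆ s) {θ : ℝ} (hθ : θ ∈ s) :
    wrapAdd θ '' X ⊆ s := by rw [image_eq hXs hθ]; exact Set.inter_subset_left

lemma image_meas {X : Set ℝ} (hX : MeasurableSet X) (hXs : X ⊆ s) {θ : ℝ} (hθ : θ ∈ s) :
    MeasurableSet (wrapAdd θ '' X) := by
  rw [image_eq hXs hθ]
  exact hs_meas.inter (((measurable_id.sub_const θ) hX).union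
    ((measurable_id.sub_const θ).add_const (2 * Real.pi) hX))

lemma not_both {X : Set ℝ} (hXs : X ⊆ s) (t : ℝ) : ¬ (t ∈ X ∧ t + 2 * Real.pi ∈ X) := by
  rintro ⟨h1, h2⟩
  obtain ⟨h10, h1T⟩ := hXs h1
  obtain ⟨h20, h2T⟩ := hXs h2
  have := T_pos
  linarith

lemma ind_image {X : Set ℝ} (hXs : X ⊆ s) {θ : ℝ} (hθ : θ ∈ s) {x : ℝ} (hx : x ∈ s) :
    ind (wrapAdd θ '' X) x = ind X (x - θ) + ind X (x - θ + 2 * Real.pi) := by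
  unfold ind
  by_cases h1 : x - θ ∈ X
  · have h2 : x - θ + 2 * Real.pi ∉ X := fun h => not_both hXs _ ⟨h1, h⟩
    have : x ∈ wrapAdd θ '' X := by rw [image_eq hXs hθ]; exact ⟨hx, Or.inl h1⟩
    simp [Set.indicator_of_mem this, Set.indicator_of_mem h1, Set.indicator_of_notMem h2]
  · by_cases h2 : x - θ + 2 * Real.pi ∈ X
    · have : x ∈ wrapAdd θ '' X := by rw [image_eq hXs hθ]; exact ⟨hx, Or.inr h2⟩
      simp [Set.indicator_of_mem this, Set.indicator_of_notMem h1, Set.indicator_of_mem h2]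
    · have : x ∉ wrapAdd θ '' X := by
        rw [image_eq hXs hθ]; rintro ⟨-, h | h⟩ <;> [exact h1 h; exact h2 h]
      simp [Set.indicator_of_notMem this, Set.indicator_of_notMem h1,
        Set.indicator_of_notMem h2]

lemma norm_cexp (z : ℝ) (q : ℤ) : ‖cexp (-(I * q * z))‖ = 1 := by
  rw [Complex.norm_exp]
  simp

lemma cexp_T (q : ℤ) : cexp (I * q * (2 * (Real.pi : ℂ))) = 1 := by
  have : (I * q * (2 * (Real.pi : ℂ))) = (q : ℂ) * (2 * Real.pi * I) := by
    push_cast; ring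
  rw [this, Complex.exp_int_mul_two_pi_mul_I]


lemma ii_aux {Y : Set ℝ} (hY : MeasurableSet Y) {g : ℝ → ℂ} (hg : Measurable g)
    (hb : ∀ t, ‖g t‖ ≤ 1) (a b : ℝ) :
    IntervalIntegrable (fun t => g t * ind Y t) volume a b := by
  apply (intervalIntegrable_const (c := (1:ℝ))).mono_fun
  · exact ((hg.mul (ind_meas hY)).aestronglyMeasurable).restrict
  · refine Filter.Eventually.of_forall fun t => ?_
    calc ‖g t * ind Y t‖ = ‖g t‖ * ‖ind Y t‖ := norm_mul _ _
    _ ≤ 1 * 1 := mul_le_mul (hb t) (ind_norm_le Y t) (norm_nonneg _) zero_le_one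
    _ = ‖(1:ℝ)‖ := by simp

lemma theta_int (q : ℤ) {X : Set ℝ} (hX : MeasurableSet X) (hXs : X ⊆ s)
    {x : ℝ} (hx : x ∈ s) :
    ∫ θ in s, cexp (-(I * q * θ)) * (ind X (x - θ) + ind X (x - θ + 2 * Real.pi))
      = cexp (-(I * q * x)) * ∫ y in X, cexp (I * q * y) := by
  obtain ⟨hx0, hxT⟩ := hx
  have hπ := Real.pi_pos
  set h : ℝ → ℂ := fun y => cexp (-(I * q * (x - y))) * ind X y with hh
  have hmeas : Measurable fun y : ℝ => cexp (-(I * q * (x - y))) := by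
    apply Complex.measurable_exp.comp
    fun_prop
  have hbd : ∀ y : ℝ, ‖cexp (-(I * q * ((x:ℂ) - y)))‖ ≤ 1 := fun y => by
    have harg : (-(I * (q:ℂ) * ((x:ℂ) - y))) = -(I * q * ((x - y : ℝ) : ℂ)) := by push_cast; ring
    rw [harg]
    exact le_of_eq (norm_cexp (x - y) q)
  have hInt : ∀ a b : ℝ, IntervalIntegrable h volume a b := fun a b =>
    ii_aux hX hmeas hbd a b
  -- step 1 : set integral over Ico = interval integral 0 .. 2π
  have e1 : ∫ θ in s, cexp (-(I * q * θ)) * (ind X (x - θ) + ind X (x - θ + 2 * Real.pi))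
      = ∫ θ in (0:ℝ)..(2 * Real.pi), cexp (-(I * q * θ)) *
          (ind X (x - θ) + ind X (x - θ + 2 * Real.pi)) := by
    rw [intervalIntegral.integral_of_le T_pos.le]
    exact setIntegral_congr_set Ico_ae_eq_Ioc
  rw [e1]
  -- step 2 : split into two interval integrals
  have ia : IntervalIntegrable (fun θ => cexp (-(I * q * θ)) * ind X (x - θ)) volume 0
      (2 * Real.pi) := by
    have : (fun θ : ℝ => cexp (-(I * q * θ)) * ind X (x - θ))
        = fun θ : ℝ => cexp (-(I * q * θ)) * ind ((fun t : ℝ => x - t) ⁻¹' X) θ := by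
      funext θ; unfold ind
      by_cases hm : x - θ ∈ X <;> simp [Set.indicator_apply, Set.mem_preimage, hm]
    rw [this]
    exact ii_aux ((measurable_const.sub measurable_id) hX)
      (by apply Complex.measurable_exp.comp; fun_prop)
      (fun t => le_of_eq (norm_cexp t q)) _ _
  have ib : IntervalIntegrable (fun θ => cexp (-(I * q * θ)) * ind X (x - θ + 2 * Real.pi))
      volume 0 (2 * Real.pi) := by
    have : (fun θ : ℝ => cexp (-(I * q * θ)) * ind X (x - θ + 2 * Real.pi))
        = fun θ : ℝ => cexp (-(I * q * θ)) * ind ((fun t : ℝ => x - t + 2 * Real.pi) ⁻¹' X) θ := by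
      funext θ; unfold ind
      by_cases hm : x - θ + 2 * Real.pi ∈ X <;>
        simp [Set.indicator_apply, Set.mem_preimage, hm]
    rw [this]
    exact ii_aux (((measurable_const.sub measurable_id).add_const (2 * Real.pi)) hX)
      (by apply Complex.measurable_exp.comp; fun_prop)
      (fun t => le_of_eq (norm_cexp t q)) _ _
  have e2 : ∫ θ in (0:ℝ)..(2 * Real.pi), cexp (-(I * q * θ)) *
        (ind X (x - θ) + ind X (x - θ + 2 * Real.pi))
      = (∫ θ in (0:ℝ)..(2 * Real.pi), cexp (-(I * q * θ)) * ind X (x - θ))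
        + ∫ θ in (0:ℝ)..(2 * Real.pi), cexp (-(I * q * θ)) * ind X (x - θ + 2 * Real.pi) := by
    rw [← intervalIntegral.integral_add ia ib]
    congr 1; funext θ; ring
  rw [e2]
  -- step 3 : substitutions
  have e3 : (∫ θ in (0:ℝ)..(2 * Real.pi), cexp (-(I * q * θ)) * ind X (x - θ))
      = ∫ y in (x - 2 * Real.pi)..x, h y := by
    have e := intervalIntegral.integral_comp_sub_left (a := (0:ℝ)) (b := 2 * Real.pi) h x
    rw [sub_zero] at e
    rw [← e]
    apply intervalIntegral.integral_congr
    intro θ _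
    simp only [hh]
    congr 2
    push_cast; ring
  have e4 : (∫ θ in (0:ℝ)..(2 * Real.pi), cexp (-(I * q * θ)) * ind X (x - θ + 2 * Real.pi))
      = ∫ y in x..(x + 2 * Real.pi), h y := by
    have e := intervalIntegral.integral_comp_sub_left (a := (0:ℝ)) (b := 2 * Real.pi) h
      (x + 2 * Real.pi)
    rw [sub_zero, show x + 2 * Real.pi - 2 * Real.pi = x by ring] at e
    rw [← e]
    apply intervalIntegral.integral_congr
    intro θ _
    simp only [hh]
    have harg : (-(I * (q:ℂ) * ((x:ℂ) - ((x:ℝ) + 2 * Real.pi - θ)))) =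
        -(I * q * θ) + I * q * (2 * (Real.pi : ℂ)) := by push_cast; ring
    push_cast
    push_cast at harg
    rw [harg, Complex.exp_add, cexp_T, mul_one,
      show x + 2 * Real.pi - θ = x - θ + 2 * Real.pi by ring]
  rw [e3, e4, intervalIntegral.integral_add_adjacent_intervals (hInt _ _) (hInt _ _)]
  -- step 4 : reduce to integral over X
  have hsub : X ⊆ Set.Ioc (x - 2 * Real.pi) (x + 2 * Real.pi) := by
    intro y hy
    obtain ⟨hy0, hyT⟩ := hXs hy
    exact ⟨by linarith, by linarith⟩
  have e5 : (∫ y in (x - 2 * Real.pi)..(x + 2 * Real.pi), h y)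
      = ∫ y in X, cexp (-(I * q * ((x:ℝ) - y))) := by
    rw [intervalIntegral.integral_of_le (by linarith)]
    have : ∀ y : ℝ, h y = X.indicator (fun y => cexp (-(I * q * ((x:ℝ) - y)))) y := by
      intro y
      simp only [hh, ind]
      by_cases hy : y ∈ X <;>
        simp [Set.indicator_of_mem, Set.indicator_of_notMem, hy]
    simp only [this]
    rw [setIntegral_indicator hX, Set.inter_eq_self_of_subset_right hsub]
  rw [e5, ← integral_const_mul]
  apply setIntegral_congr_fun hX
  intro y hy
  simp only [← Complex.exp_add]
  congr 1
  push_cast; ring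

instance : IsFiniteMeasure (volume.restrict s) := by
  constructor
  rw [Measure.restrict_apply_univ]
  unfold s
  rw [Real.volume_Ico]
  exact ENNReal.ofReal_lt_top

lemma key (q : ℤ) {X : Set ℝ} (hX : MeasurableSet X) (hXs : X ⊆ s)
    (μ : Measure ℝ) [IsFiniteMeasure μ] :
    ((∫ θ : ℝ in s, cexp (-(I * q * θ)) * (((μ.restrict s) (wrapAdd θ '' X)).toReal : ℂ))
      = (∫ x in s, cexp (-(I * q * x)) ∂μ) * ∫ y in X, cexp (I * q * y))
    ∧ Integrable (fun θ : ℝ => cexp (-(I * q * θ)) *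
        (((μ.restrict s) (wrapAdd θ '' X)).toReal : ℂ)) (volume.restrict s) := by
  set μ' := μ.restrict s with hμ'
  set f : ℝ → ℝ → ℂ := fun θ x =>
    cexp (-(I * q * θ)) * (ind X (x - θ) + ind X (x - θ + 2 * Real.pi)) with hf
  have hmexp : Measurable fun θ : ℝ => cexp (-(I * q * θ)) := by
    apply Complex.measurable_exp.comp; fun_prop
  have hfm : Measurable (Function.uncurry f) := by
    apply (hmexp.comp measurable_fst).mul
    exact ((ind_meas hX).comp (measurable_snd.sub measurable_fst)).add
      ((ind_meas hX).comp ((measurable_snd.sub measurable_fst).add_const _))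
  have hfi : Integrable (Function.uncurry f) ((volume.restrict s).prod μ') := by
    apply (integrable_const (2:ℝ)).mono' hfm.aestronglyMeasurable
    refine Filter.Eventually.of_forall fun p => ?_
    calc ‖Function.uncurry f p‖
        = ‖cexp (-(I * q * p.1))‖ * ‖ind X (p.2 - p.1) + ind X (p.2 - p.1 + 2 * Real.pi)‖ :=
          norm_mul _ _
      _ ≤ 1 * (‖ind X (p.2 - p.1)‖ + ‖ind X (p.2 - p.1 + 2 * Real.pi)‖) := by
          apply mul_le_mul (le_of_eq (norm_cexp p.1 q)) (norm_add_le _ _) (norm_nonneg _)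
            zero_le_one
      _ ≤ 1 * (1 + 1) := by
          have := ind_norm_le X (p.2 - p.1)
          have := ind_norm_le X (p.2 - p.1 + 2 * Real.pi)
          apply mul_le_mul_of_nonneg_left (by linarith) zero_le_one
      _ = (2:ℝ) := by norm_num
  have h1 : ∀ θ ∈ s, ∫ x, f θ x ∂μ'
      = cexp (-(I * q * θ)) * (((μ' (wrapAdd θ '' X)).toReal : ℝ) : ℂ) := by
    intro θ hθ
    simp only [hf]
    rw [integral_const_mul]
    congr 1
    have heq : ∫ x, (ind X (x - θ) + ind X (x - θ + 2 * Real.pi)) ∂μ'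
        = ∫ x, ind (wrapAdd θ '' X) x ∂μ' := by
      apply integral_congr_ae
      rw [hμ', Filter.EventuallyEq, ae_restrict_iff' hs_meas]
      exact Filter.Eventually.of_forall fun x hx => (ind_image hXs hθ hx).symm
    rw [heq]
    unfold ind
    rw [integral_indicator_const (1:ℂ) (image_meas hX hXs hθ)]
    simp [Complex.real_smul]
    rfl
  have hswap := integral_integral_swap hfi
  refine ⟨?_, ?_⟩
  · calc ∫ θ in s, cexp (-(I * q * θ)) * (((μ' (wrapAdd θ '' X)).toReal : ℝ) : ℂ)
        = ∫ θ in s, (∫ x, f θ x ∂μ') :=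
          setIntegral_congr_fun hs_meas (fun θ hθ => (h1 θ hθ).symm)
      _ = ∫ x, (∫ θ in s, f θ x) ∂μ' := hswap
      _ = ∫ x, cexp (-(I * q * x)) * (∫ y in X, cexp (I * q * y)) ∂μ' := by
          apply integral_congr_ae
          rw [hμ', Filter.EventuallyEq, ae_restrict_iff' hs_meas]
          exact Filter.Eventually.of_forall fun x hx => theta_int q hX hXs hx
      _ = (∫ x, cexp (-(I * q * x)) ∂μ') * ∫ y in X, cexp (I * q * y) :=
          integral_mul_const _ _
  · apply hfi.integral_prod_left.congr
    rw [Filter.EventuallyEq, ae_restrict_iff' hs_meas]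
    exact Filter.Eventually.of_forall fun θ hθ => h1 θ hθ

lemma nu_apply (ν : VectorMeasure ℝ ℂ) {A : Set ℝ} (hA : MeasurableSet A) :
    ν A = ((((ComplexMeasure.re ν).toJordanDecomposition.posPart A).toReal
        - ((ComplexMeasure.re ν).toJordanDecomposition.negPart A).toReal : ℝ) : ℂ)
      + ((((ComplexMeasure.im ν).toJordanDecomposition.posPart A).toReal
        - ((ComplexMeasure.im ν).toJordanDecomposition.negPart A).toReal : ℝ) : ℂ) * I := by
  have hre : (ComplexMeasure.re ν) A
      = ((ComplexMeasure.re ν).toJordanDecomposition.posPart A).toReal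
        - ((ComplexMeasure.re ν).toJordanDecomposition.negPart A).toReal := by
    conv_lhs => rw [← (ComplexMeasure.re ν).toSignedMeasure_toJordanDecomposition]
    rw [JordanDecomposition.toSignedMeasure, Measure.toSignedMeasure_sub_apply hA]
    rfl
  have him : (ComplexMeasure.im ν) A
      = ((ComplexMeasure.im ν).toJordanDecomposition.posPart A).toReal
        - ((ComplexMeasure.im ν).toJordanDecomposition.negPart A).toReal := by
    conv_lhs => rw [← (ComplexMeasure.im ν).toSignedMeasure_toJordanDecomposition]
    rw [JordanDecomposition.toSignedMeasure, Measure.toSignedMeasure_sub_apply hA]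
    rfl
  have hmk : ν A = Complex.mk ((ComplexMeasure.re ν) A) ((ComplexMeasure.im ν) A) := rfl
  rw [hmk, Complex.mk_eq_add_mul_I, hre, him]

lemma int_one (μ : Measure ℝ) [IsFiniteMeasure μ] :
    ∫ x in s, cexp (-(I * ((0:ℤ) : ℂ) * x)) ∂μ = ((μ s).toReal : ℂ) := by
  have h : ∀ x ∈ s, cexp (-(I * ((0:ℤ) : ℂ) * (x:ℂ))) = (1:ℂ) := fun x _ => by norm_num
  rw [setIntegral_congr_fun hs_meas h, setIntegral_const]
  simp [Complex.real_smul]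
  rfl

end CovAux

/-- If `ν_q` is a σ-additive complex set function on the Borel sets of `[0, 2π)` with
`ν_q(X ⊕ θ) = e^{iqθ} ν_q(X)` and `ν_q([0,2π)) = δ_{0,q}`, then
`ν_q(X) = c_q (2π)⁻¹ ∫_X e^{iqθ} dθ` for some constant `c_q`, with `c_0 = 1`. -/
theorem covariant_set_function_eq_c_mul_integral (q : ℤ)
    (ν : VectorMeasure ℝ ℂ)
    (hcov : ∀ X : Set ℝ, MeasurableSet X → X ⊆ Set.Ico 0 (2 * Real.pi) →
      ∀ θ ∈ Set.Ico (0 : ℝ) (2 * Real.pi),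
        ν (wrapAdd θ '' X) = Complex.exp (Complex.I * (q : ℂ) * (θ : ℂ)) * ν X)
    (hnorm : ν (Set.Ico 0 (2 * Real.pi)) = if q = 0 then 1 else 0) :
    ∃ c : ℂ, (q = 0 → c = 1) ∧
      ∀ X : Set ℝ, MeasurableSet X → X ⊆ Set.Ico 0 (2 * Real.pi) →
        ν X = c * (2 * Real.pi : ℂ)⁻¹ *
          ∫ θ in X, Complex.exp (Complex.I * (q : ℂ) * (θ : ℂ)) := by
  classical
  have hπ := Real.pi_pos
  set p1 := (ComplexMeasure.re ν).toJordanDecomposition.posPart with hp1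
  set n1 := (ComplexMeasure.re ν).toJordanDecomposition.negPart with hn1
  set p2 := (ComplexMeasure.im ν).toJordanDecomposition.posPart with hp2
  set n2 := (ComplexMeasure.im ν).toJordanDecomposition.negPart with hn2
  set c : ℂ := (∫ x in CovAux.s, cexp (-(I * q * x)) ∂p1)
    - (∫ x in CovAux.s, cexp (-(I * q * x)) ∂n1)
    + ((∫ x in CovAux.s, cexp (-(I * q * x)) ∂p2)
    - (∫ x in CovAux.s, cexp (-(I * q * x)) ∂n2)) * I with hc
  have hss : CovAux.s = Set.Ico (0:ℝ) (2 * Real.pi) := rfl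
  refine ⟨c, ?_, ?_⟩
  · intro hq0
    subst hq0
    rw [hc, CovAux.int_one p1, CovAux.int_one n1, CovAux.int_one p2, CovAux.int_one n2]
    have := CovAux.nu_apply ν (A := CovAux.s) CovAux.hs_meas
    rw [hss] at this
    rw [hnorm] at this
    simp only [if_pos rfl] at this
    rw [← hp1, ← hn1, ← hp2, ← hn2] at this
    rw [hss]
    push_cast at this ⊢
    linear_combination -this
  · intro X hX hXs
    rw [← hss] at hXs
    have KP1 := CovAux.key q hX hXs p1
    have KN1 := CovAux.key q hX hXs n1
    have KP2 := CovAux.key q hX hXs p2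
    have KN2 := CovAux.key q hX hXs n2
    set CX : ℂ := ∫ y in X, cexp (I * q * y) with hCX
    -- first evaluation
    have hE1 : (∫ θ : ℝ in CovAux.s, cexp (-(I * q * θ)) * ν (wrapAdd θ '' X))
        = ((2 * Real.pi : ℝ) : ℂ) * ν X := by
      have hpt : ∀ θ ∈ CovAux.s, cexp (-(I * (q:ℂ) * θ)) * ν (wrapAdd θ '' X) = ν X := by
        intro θ hθ
        rw [hss] at hθ
        rw [hcov X hX (by rwa [hss] at hXs) θ hθ, ← mul_assoc, ← Complex.exp_add]
        norm_num
      rw [setIntegral_congr_fun CovAux.hs_meas hpt, setIntegral_const]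
      have : (volume CovAux.s).toReal = 2 * Real.pi := by
        rw [hss, Real.volume_Ico, ENNReal.toReal_ofReal (by linarith)]
        ring
      rw [show volume.real CovAux.s = (volume CovAux.s).toReal from rfl, this, Complex.real_smul]
    -- second evaluation
    have hE2 : (∫ θ : ℝ in CovAux.s, cexp (-(I * q * θ)) * ν (wrapAdd θ '' X))
        = c * CX := by
      have hdec : ∀ θ ∈ CovAux.s, cexp (-(I * (q:ℂ) * θ)) * ν (wrapAdd θ '' X)
          = (cexp (-(I * q * θ)) * (((p1.restrict CovAux.s) (wrapAdd θ '' X)).toReal : ℂ)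
            - cexp (-(I * q * θ)) * (((n1.restrict CovAux.s) (wrapAdd θ '' X)).toReal : ℂ))
            + (cexp (-(I * q * θ)) * (((p2.restrict CovAux.s) (wrapAdd θ '' X)).toReal : ℂ)
            - cexp (-(I * q * θ)) * (((n2.restrict CovAux.s) (wrapAdd θ '' X)).toReal : ℂ))
              * I := by
        intro θ hθ
        have himg := CovAux.image_meas hX hXs hθ
        have hsub := CovAux.image_subset hXs hθ
        have hres : ∀ (μ : Measure ℝ),
            (μ.restrict CovAux.s) (wrapAdd θ '' X) = μ (wrapAdd θ '' X) := fun μ => by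
          rw [Measure.restrict_apply himg, Set.inter_eq_self_of_subset_left hsub]
        rw [hres p1, hres n1, hres p2, hres n2, CovAux.nu_apply ν himg,
          ← hp1, ← hn1, ← hp2, ← hn2]
        push_cast
        ring
      have iAB : Integrable (fun θ : ℝ =>
          cexp (-(I * q * θ)) * (((p1.restrict CovAux.s) (wrapAdd θ '' X)).toReal : ℂ)
            - cexp (-(I * q * θ)) * (((n1.restrict CovAux.s) (wrapAdd θ '' X)).toReal : ℂ))
          (volume.restrict CovAux.s) := KP1.2.sub KN1.2
      have iCD : Integrable (fun θ : ℝ =>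
          (cexp (-(I * q * θ)) * (((p2.restrict CovAux.s) (wrapAdd θ '' X)).toReal : ℂ)
            - cexp (-(I * q * θ)) * (((n2.restrict CovAux.s) (wrapAdd θ '' X)).toReal : ℂ)) * I)
          (volume.restrict CovAux.s) := (KP2.2.sub KN2.2).mul_const I
      rw [setIntegral_congr_fun CovAux.hs_meas hdec,
        integral_add iAB iCD,
        integral_sub KP1.2 KN1.2, integral_mul_const, integral_sub KP2.2 KN2.2,
        KP1.1, KN1.1, KP2.1, KN2.1, hc]
      ring
    have hkey : ((2 * Real.pi : ℝ) : ℂ) * ν X = c * CX := hE1.symm.trans hE2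
    have h2π : ((2 * Real.pi : ℝ) : ℂ) ≠ 0 := by
      push_cast
      simp [Real.pi_ne_zero]
    rw [show ((2 * Real.pi : ℂ)) = ((2 * Real.pi : ℝ) : ℂ) by push_cast; ring]
    have hfin : (((2 * Real.pi : ℝ) : ℂ))⁻¹ * ((((2 * Real.pi : ℝ) : ℂ)) * ν X)
        = (((2 * Real.pi : ℝ) : ℂ))⁻¹ * (c * CX) := by rw [hkey]
    rw [inv_mul_cancel_left₀ h2π] at hfin
    rw [hfin]
    ring
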